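/- (Quadratic energy conservation of the EQ reformulation.) Let N be a positive natural number, and work in ℝ^N with the standard inner product ⟨·,·⟩ and componentwise (pointwise) product ⊙. Let S : ℝ^N → ℝ^N be a linear map with ⟨S v, v⟩ = 0 for all v ∈ ℝ^N. Let u, q : ℝ → ℝ^N be differentiable and satisfy u'(t) = S( u(t) + (1/6) q(t) + (1/3) u(t) ⊙ u(t) ) and q'(t) = 2 u(t) ⊙ u'(t) for all t. Then the quadratic energy E(t) = ½ ⟨u(t), u(t)⟩ + (1/6) ⟨u(t), q(t)⟩ is constant in t. -/

import Mathlib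

open scoped RealInnerProductSpace

/-- Componentwise (pointwise) product on `EuclideanSpace ℝ (Fin N)`. -/
def cwMul {N : ℕ} (v w : EuclideanSpace ℝ (Fin N)) : EuclideanSpace ℝ (Fin N) :=
  WithLp.toLp 2 (fun i => v i * w i)

lemma inner_cwMul_shift {N : ℕ} (a b c : EuclideanSpace ℝ (Fin N)) :
    ⟪a, cwMul b c⟫ = ⟪cwMul b a, c⟫ := by
  simp only [PiLp.inner_apply, RCLike.inner_apply, conj_trivial, cwMul, PiLp.toLp_apply]
  exact Finset.sum_congr rfl fun i _ => by ring

/-- the EQ reformulation preserves the quadratic energy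
E(t) = ½⟨u,u⟩ + (1/6)⟨u,q⟩. -/
theorem eq_reformulation_quadratic_energy_conservation
    (N : ℕ) (hN : 0 < N)
    (S : EuclideanSpace ℝ (Fin N) →ₗ[ℝ] EuclideanSpace ℝ (Fin N))
    (hS : ∀ v : EuclideanSpace ℝ (Fin N), ⟪S v, v⟫ = 0)
    (u q : ℝ → EuclideanSpace ℝ (Fin N))
    (hu : Differentiable ℝ u) (hq : Differentiable ℝ q)
    (hueq : ∀ t, deriv u t
      = S (u t + (1/6 : ℝ) • q t + (1/3 : ℝ) • cwMul (u t) (u t)))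
    (hqeq : ∀ t, deriv q t = (2 : ℝ) • cwMul (u t) (deriv u t)) :
    ∀ t₁ t₂ : ℝ,
      (1/2 : ℝ) * ⟪u t₁, u t₁⟫ + (1/6 : ℝ) * ⟪u t₁, q t₁⟫
        = (1/2 : ℝ) * ⟪u t₂, u t₂⟫ + (1/6 : ℝ) * ⟪u t₂, q t₂⟫ := by
  set E : ℝ → ℝ := fun t => (1/2 : ℝ) * ⟪u t, u t⟫ + (1/6 : ℝ) * ⟪u t, q t⟫ with hE
  have key : ∀ t, HasDerivAt E 0 t := by
    intro t
    have hu' := (hu t).hasDerivAt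
    have hq' := (hq t).hasDerivAt
    have h1 : HasDerivAt (fun t => ⟪u t, u t⟫)
        (⟪u t, deriv u t⟫ + ⟪deriv u t, u t⟫) t := hu'.inner ℝ hu'
    have h2 : HasDerivAt (fun t => ⟪u t, q t⟫)
        (⟪u t, deriv q t⟫ + ⟪deriv u t, q t⟫) t := hu'.inner ℝ hq'
    have := ((h1.const_mul (1/2 : ℝ)).add (h2.const_mul (1/6 : ℝ)))
    refine this.congr_deriv ?_
    have hsym : ⟪u t, deriv u t⟫ = ⟪deriv u t, u t⟫ := real_inner_comm _ _
    have hq2 : ⟪u t, deriv q t⟫ = 2 * ⟪cwMul (u t) (u t), deriv u t⟫ := by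
      rw [hqeq, inner_smul_right, inner_cwMul_shift]
    have hqs : ⟪cwMul (u t) (u t), deriv u t⟫ = ⟪deriv u t, cwMul (u t) (u t)⟫ :=
      real_inner_comm _ _
    have hz : ⟪deriv u t, u t + (1/6 : ℝ) • q t + (1/3 : ℝ) • cwMul (u t) (u t)⟫ = 0 := by
      rw [hueq]; exact hS _
    rw [inner_add_right, inner_add_right, inner_smul_right, inner_smul_right] at hz
    rw [hsym, hq2, hqs]
    linarith
  intro t₁ t₂
  exact is_const_of_deriv_eq_zero
    (fun t => (key t).differentiableAt) (fun t => (key t).deriv) t₁ t₂
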